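/- Let C be a small ℂ-linear category and let φ ∈ CN^r(C) be the character of an r-dimensional cycle (S, ∂̂, T̂, ρ) over C. Define ψ ∈ CN^{r+1}(C) by ψ(f⁰⊗…⊗f^{r+1}) := Σ_{j=1}^{r+1} (−1)^{j−1} T̂(ρ(f⁰)∘∂̂ρ(f¹)∘…∘∂̂ρ(f^{j−1})∘ρ(f^j)∘∂̂ρ(f^{j+1})∘…∘∂̂ρ(f^{r+1})), and define Sφ ∈ CN^{r+2}(C) (the image of φ under the periodicity operator) by (Sφ)(f⁰⊗…⊗f^{r+2}) := Σ_{j=1}^{r+1} T̂(ρ(f⁰)∘∂̂ρ(f¹)∘…∘∂̂ρ(f^{j−1})∘ρ(f^j f^{j+1})∘∂̂ρ(f^{j+2})∘…∘∂̂ρ(f^{r+2})). Then Sφ = bψ; in particular Sφ is a Hochschild coboundary. -/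

import Mathlib

open CategoryTheory

noncomputable section

namespace CFM

universe v u u₁ v₁

variable (C : Type u) [Category.{v} C]

/-- A composable chain of morphisms `(f⁰, f¹, …, fⁿ)` with `fⁱ : Xᵢ₊₁ ⟶ Xᵢ`;
`Chain C X Y` consists of chains with innermost source `X` and outermost target `Y`;
`f⁰` is the outermost morphism. -/
inductive Chain : C → C → Type (max u v)
  | single : {X Y : C} → (X ⟶ Y) → Chain X Y
  | cons : {X Y Z : C} → (Y ⟶ Z) → Chain X Y → Chain X Z

namespace Chain

variable {C}

/-- Number of morphisms in the chain. -/
def size : {X Y : C} → Chain C X Y → ℕ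
  | _, _, single _ => 1
  | _, _, cons _ c => c.size + 1

theorem one_le_size {X Y : C} (c : Chain C X Y) : 1 ≤ c.size := by
  induction c with
  | single f => simp [size]
  | cons f c ih => simp [size]

/-- Append a morphism at the inner end of a chain. -/
def snoc : {V X Y : C} → Chain C X Y → (V ⟶ X) → Chain C V Y
  | _, _, _, single f, g => cons f (single g)
  | _, _, _, cons f c, g => cons f (snoc c g)

/-- Compose the morphisms in slots `i` and `i+1` of the chain (`fⁱ ∘ fⁱ⁺¹`). -/
def composeAt : {X Y : C} → ℕ → Chain C X Y → Chain C X Y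
  | _, _, _, single f => single f
  | _, _, 0, cons f (single g) => single (g ≫ f)
  | _, _, 0, cons f (cons g c) => cons (g ≫ f) c
  | _, _, (i+1), cons f c => cons f (composeAt i c)

end Chain

/-- A cyclically composable tuple `(f⁰, …, fⁿ)`, i.e. an element of the cyclic nerve:
a chain from some object back to itself. -/
def CycChain := Σ X : C, Chain C X X

/-- A function on the cyclic nerve of `C`; an element of `CN^n(C)` is (the multilinear
extension of) such a function, evaluated on tuples of size `n+1`. -/
def Cochain := CycChain C → ℂ

variable {C}

/-- The inverse cyclic rotation `(f⁰, …, fⁿ) ↦ (f¹, …, fⁿ, f⁰)`. -/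
def rotInv : CycChain C → CycChain C
  | ⟨X, Chain.single f⟩ => ⟨X, Chain.single f⟩
  | ⟨_, Chain.cons f c⟩ => ⟨_, c.snoc f⟩

/-- The cyclic rotation `(f⁰, …, fⁿ) ↦ (fⁿ, f⁰, …, fⁿ⁻¹)`. -/
def rot (t : CycChain C) : CycChain C := rotInv^[t.2.size - 1] t

/-- The (unsigned) cyclic operator: `(τφ)(f⁰⊗…⊗fⁿ) = φ(fⁿ⊗f⁰⊗…⊗fⁿ⁻¹)`. -/
def tauOp (φ : Cochain C) : Cochain C := fun t => φ (rot t)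

/-- The signed cyclic operator `λₙ = (-1)ⁿ τₙ` on `CN^n(C)`. -/
def lamOp (n : ℕ) (φ : Cochain C) : Cochain C := fun t => (-1 : ℂ) ^ n * φ (rot t)

/-- The operator `A = 1 + λₙ + λₙ² + ⋯ + λₙⁿ` on `CN^n(C)`. -/
def AOp (n : ℕ) (φ : Cochain C) : Cochain C :=
  fun t => ∑ k ∈ Finset.range (n + 1), (-1 : ℂ) ^ (n * k) * φ (rot^[k] t)

/-- The Hochschild coboundary `b : CN^n(C) → CN^{n+1}(C)`:
`(bφ)(f⁰⊗…⊗fⁿ⁺¹) = Σᵢ (-1)ⁱ φ(f⁰⊗…⊗fⁱfⁱ⁺¹⊗…⊗fⁿ⁺¹) + (-1)ⁿ⁺¹ φ(fⁿ⁺¹f⁰⊗f¹⊗…⊗fⁿ)`. -/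
def bOp (n : ℕ) (φ : Cochain C) : Cochain C := fun t =>
  (∑ i ∈ Finset.range (n + 1), (-1 : ℂ) ^ i * φ ⟨t.1, Chain.composeAt i t.2⟩) +
    (-1 : ℂ) ^ (n + 1) * φ ⟨(rot t).1, Chain.composeAt 0 (rot t).2⟩

/-- The truncated Hochschild coboundary `b'` (the last, cyclic, face omitted). -/
def b'Op (n : ℕ) (φ : Cochain C) : Cochain C := fun t =>
  ∑ i ∈ Finset.range (n + 1), (-1 : ℂ) ^ i * φ ⟨t.1, Chain.composeAt i t.2⟩

/-- The operator `B₀ : CN^{n+1}(C) → CN^n(C)`: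
`(B₀φ)(f⁰⊗…⊗fⁿ) = φ(id⊗f⁰⊗…⊗fⁿ) - (-1)ⁿ⁺¹ φ(f⁰⊗…⊗fⁿ⊗id)`. -/
def B0Op (n : ℕ) (φ : Cochain C) : Cochain C := fun t =>
  φ ⟨t.1, Chain.cons (𝟙 t.1) t.2⟩ - (-1 : ℂ) ^ (n + 1) * φ ⟨t.1, t.2.snoc (𝟙 t.1)⟩

/-- Connes' operator `B = A ∘ B₀ : CN^{n+1}(C) → CN^n(C)`. -/
def BOp (n : ℕ) (φ : Cochain C) : Cochain C := AOp n (B0Op n φ)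

/-- A differential graded semicategory over ℂ: hom-spaces are non-negatively graded
cochain complexes of ℂ-vector spaces, with a bilinear associative composition that is a
map of complexes (graded Leibniz rule).  Composition carries a proof `i + j = k` to
avoid dependent rewriting of degrees. -/
structure DGSemicat where
  Obj : Type u₁
  Hom : Obj → Obj → ℕ → Type v₁
  [acg : ∀ X Y n, AddCommGroup (Hom X Y n)]
  [mod : ∀ X Y n, Module ℂ (Hom X Y n)]
  comp : ∀ {X Y Z : Obj} {i j k : ℕ}, i + j = k → Hom Y Z i → Hom X Y j → Hom X Z k
  comp_add_left : ∀ {X Y Z : Obj} {i j k : ℕ} (h : i + j = k) (g g' : Hom Y Z i)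
    (f : Hom X Y j), comp h (g + g') f = comp h g f + comp h g' f
  comp_add_right : ∀ {X Y Z : Obj} {i j k : ℕ} (h : i + j = k) (g : Hom Y Z i)
    (f f' : Hom X Y j), comp h g (f + f') = comp h g f + comp h g f'
  comp_smul_left : ∀ {X Y Z : Obj} {i j k : ℕ} (h : i + j = k) (a : ℂ) (g : Hom Y Z i)
    (f : Hom X Y j), comp h (a • g) f = a • comp h g f
  comp_smul_right : ∀ {X Y Z : Obj} {i j k : ℕ} (h : i + j = k) (a : ℂ) (g : Hom Y Z i)
    (f : Hom X Y j), comp h g (a • f) = a • comp h g f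
  comp_assoc : ∀ {W X Y Z : Obj} {i j k s t u : ℕ}
    (h₁ : i + j = s) (h₂ : s + k = t) (h₃ : j + k = u) (h₄ : i + u = t)
    (g : Hom Y Z i) (f : Hom X Y j) (e : Hom W X k),
    comp h₂ (comp h₁ g f) e = comp h₄ g (comp h₃ f e)
  d : ∀ {X Y : Obj} {n : ℕ}, Hom X Y n → Hom X Y (n + 1)
  d_add : ∀ {X Y : Obj} {n : ℕ} (f g : Hom X Y n), d (f + g) = d f + d g
  d_smul : ∀ {X Y : Obj} {n : ℕ} (a : ℂ) (f : Hom X Y n), d (a • f) = a • d f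
  d_sq : ∀ {X Y : Obj} {n : ℕ} (f : Hom X Y n), d (d f) = 0
  leibniz : ∀ {X Y Z : Obj} {i j k : ℕ} (h : i + j = k) (h₁ : (i + 1) + j = k + 1)
    (h₂ : i + (j + 1) = k + 1) (g : Hom Y Z i) (f : Hom X Y j),
    d (comp h g f) = comp h₁ (d g) f + ((-1 : ℂ) ^ i) • comp h₂ g (d f)

attribute [instance] DGSemicat.acg DGSemicat.mod

/-- An `r`-dimensional cycle `(S, ∂̂, T̂, ρ)` over a small ℂ-linear category `C`:
a DG-semicategory `S` whose degree-0 part is an ordinary category (with identities `one`),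
an `r`-dimensional closed graded trace `tr`, and a ℂ-linear semifunctor `ρ : C → S⁰`. -/
structure CycleOver.{u', v', u₁', v₁'} (C : Type u') [Category.{v'} C] [Preadditive C]
    [CategoryTheory.Linear ℂ C] (r : ℕ) where
  S : DGSemicat.{u₁', v₁'}
  one : ∀ X, S.Hom X X 0
  one_comp : ∀ {X Y} (f : S.Hom X Y 0), S.comp rfl (one Y) f = f
  comp_one : ∀ {X Y} (f : S.Hom X Y 0), S.comp rfl f (one X) = f
  tr : ∀ X, S.Hom X X r →ₗ[ℂ] ℂ
  tr_closed : ∀ {X : S.Obj} {k : ℕ} (hk : k + 1 = r) (f : S.Hom X X k),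
    tr X (hk ▸ S.d f) = 0
  tr_graded : ∀ {X Y : S.Obj} {i j : ℕ} (h : i + j = r) (h' : j + i = r)
    (g : S.Hom Y X i) (g' : S.Hom X Y j),
    tr X (S.comp h g g') = ((-1 : ℂ) ^ (i * j)) * tr Y (S.comp h' g' g)
  ρObj : C → S.Obj
  ρMap : ∀ {X Y : C}, (X ⟶ Y) → S.Hom (ρObj X) (ρObj Y) 0
  ρMap_comp : ∀ {X Y Z : C} (f : X ⟶ Y) (g : Y ⟶ Z),
    ρMap (f ≫ g) = S.comp rfl (ρMap g) (ρMap f)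
  ρMap_add : ∀ {X Y : C} (f g : X ⟶ Y), ρMap (f + g) = ρMap f + ρMap g
  ρMap_smul : ∀ {X Y : C} (a : ℂ) (f : X ⟶ Y), ρMap (a • f) = a • ρMap f

variable {C : Type u} [Category.{v} C] [Preadditive C] [CategoryTheory.Linear ℂ C] {r : ℕ}

/-- Transport a homogeneous morphism along an equality of degrees. -/
def degCast {S : DGSemicat.{u₁', v₁'}} {X Y : S.Obj} {a b : ℕ} (h : a = b)
    (f : S.Hom X Y a) : S.Hom X Y b := h ▸ f

/-- `∂̂ρ(f⁰) ∘ ∂̂ρ(f¹) ∘ ⋯ ∘ ∂̂ρ(fⁿ)` along a chain (an element of degree `size`). -/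
def prodD (Z : CycleOver.{u, v, u₁, v₁} C r) :
    (X Y : C) → (c : Chain C X Y) → Z.S.Hom (Z.ρObj X) (Z.ρObj Y) c.size
  | _, _, Chain.single f => degCast (by simp only [Chain.size]) (Z.S.d (Z.ρMap f))
  | _, _, Chain.cons f c => Z.S.comp (by simp only [Chain.size]; omega)
      (Z.S.d (Z.ρMap f)) (prodD Z _ _ c)

/-- `ρ(f⁰) ∘ ∂̂ρ(f¹) ∘ ⋯ ∘ ∂̂ρ(fⁿ)` along a chain (degree `size - 1`). -/
def charEl (Z : CycleOver.{u, v, u₁, v₁} C r) :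
    (X Y : C) → (c : Chain C X Y) → Z.S.Hom (Z.ρObj X) (Z.ρObj Y) (c.size - 1)
  | _, _, Chain.single f => degCast (by simp only [Chain.size]) (Z.ρMap f)
  | _, _, Chain.cons f c => Z.S.comp (by simp only [Chain.size]; omega)
      (Z.ρMap f) (prodD Z _ _ c)

/-- `∂̂ρ(f⁰) ⋯ ρ(fʲ) ⋯ ∂̂ρ(fⁿ)`: all slots differentiated except slot `j`
(degree `size - 1`). -/
def prodDExcept (Z : CycleOver.{u, v, u₁, v₁} C r) :
    (X Y : C) → (c : Chain C X Y) → ℕ → Z.S.Hom (Z.ρObj X) (Z.ρObj Y) (c.size - 1)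
  | _, _, Chain.single f, _ => degCast (by simp only [Chain.size]) (Z.ρMap f)
  | _, _, Chain.cons f c, 0 => Z.S.comp (by simp only [Chain.size]; omega)
      (Z.ρMap f) (prodD Z _ _ c)
  | _, _, Chain.cons f c, (j+1) => Z.S.comp
      (by simp only [Chain.size]; have := Chain.one_le_size c; omega)
      (Z.S.d (Z.ρMap f)) (prodDExcept Z _ _ c j)

/-- `ρ(f⁰) ∂̂ρ(f¹) ⋯ ρ(fʲ) ⋯ ∂̂ρ(fⁿ)`: slot `0` and slot `j` undifferentiated, all other
slots differentiated (degree `size - 2`). -/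
def psiEl (Z : CycleOver.{u, v, u₁, v₁} C r) :
    (X Y : C) → (c : Chain C X Y) → ℕ → Z.S.Hom (Z.ρObj X) (Z.ρObj Y) (c.size - 2)
  | _, _, Chain.single f, _ => degCast (by simp only [Chain.size]) (Z.ρMap f)
  | _, _, Chain.cons f c, j => Z.S.comp (by simp only [Chain.size]; omega)
      (Z.ρMap f) (prodDExcept Z _ _ c (j - 1))

/-- The character `φ ∈ CN^r(C)` of an `r`-dimensional cycle:
`φ(f⁰⊗…⊗f^r) = T̂(ρ(f⁰) ∂̂ρ(f¹) ⋯ ∂̂ρ(f^r))`. -/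
noncomputable def charCochain (Z : CycleOver.{u, v, u₁, v₁} C r) : Cochain C := fun t =>
  if h : t.2.size - 1 = r then Z.tr (Z.ρObj t.1) (h ▸ charEl Z _ _ t.2) else 0

/-- `T̂(ρ(f⁰) ∂̂ρ(f¹) ⋯ ρ(fʲ) ⋯ ∂̂ρ(fⁿ))` (defined when the degree matches `r`). -/
noncomputable def trPsi (Z : CycleOver.{u, v, u₁, v₁} C r) {X : C} (c : Chain C X X)
    (j : ℕ) : ℂ :=
  if h : c.size - 2 = r then Z.tr (Z.ρObj X) (h ▸ psiEl Z _ _ c j) else 0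

/-- The cochain `ψ ∈ CN^{r+1}(C)` of Proposition `S(φ) = bψ`:
`ψ(f⁰⊗…⊗f^{r+1}) = Σ_{j=1}^{r+1} (-1)^{j-1} T̂(ρ(f⁰)∂̂ρ(f¹)⋯ρ(fʲ)⋯∂̂ρ(f^{r+1}))`. -/
noncomputable def psiCochain (Z : CycleOver.{u, v, u₁, v₁} C r) : Cochain C := fun t =>
  ∑ j ∈ Finset.Icc 1 (r + 1), (-1 : ℂ) ^ (j - 1) * trPsi Z t.2 j

/-- The image `Sφ ∈ CN^{r+2}(C)` of the character `φ` of an `r`-dimensional cycle under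
the periodicity operator:
`(Sφ)(f⁰⊗…⊗f^{r+2}) = Σ_{j=1}^{r+1} T̂(ρ(f⁰)∂̂ρ(f¹)⋯∂̂ρ(f^{j-1}) ρ(fʲf^{j+1}) ∂̂ρ(f^{j+2})⋯∂̂ρ(f^{r+2}))`. -/
noncomputable def SCochain (Z : CycleOver.{u, v, u₁, v₁} C r) : Cochain C := fun t =>
  ∑ j ∈ Finset.Icc 1 (r + 1), trPsi Z (Chain.composeAt j t.2) j

set_option linter.unusedSectionVars false

/-! ### Auxiliary lemmas for the proof of `S_char_eq_b_psi` -/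

namespace Chain

theorem size_snoc : ∀ {V X Y : C} (c : Chain C X Y) (g : V ⟶ X),
    (c.snoc g).size = c.size + 1
  | _, _, _, single _, _ => by simp [snoc, size]
  | _, _, _, cons f c, g => by
      simp only [snoc, size, size_snoc c g]

theorem size_composeAt : ∀ {X Y : C} (c : Chain C X Y) (i : ℕ), i + 2 ≤ c.size →
    (composeAt i c).size + 1 = c.size := by
  intro X Y c
  induction c with
  | single f => intro i h; simp [size] at h
  | cons f c ih =>
    intro i h
    match i, c with
    | 0, single g => simp [composeAt, size]
    | 0, cons g c' => simp [composeAt, size]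
    | (i+1), c =>
      have h' : i + 2 ≤ c.size := by simp only [size] at h; omega
      simp only [composeAt, size]
      rw [ih i h']

theorem eq_snoc_of_two_le_size : ∀ {X Y : C} (c : Chain C X Y), 2 ≤ c.size →
    ∃ (Z : C) (c' : Chain C Z Y) (g : X ⟶ Z), c = c'.snoc g := by
  intro X Y c
  induction c with
  | single f => intro h; simp [size] at h
  | cons f c ih =>
    intro _
    match c, ih with
    | single g, _ => exact ⟨_, Chain.single f, g, by simp [snoc]⟩
    | cons g c', ih =>
      obtain ⟨Z, c'', g', he⟩ := ih (by simp only [size]; have := c'.one_le_size; omega)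
      exact ⟨Z, Chain.cons f c'', g', by rw [he]; simp [snoc]⟩

/-- Concatenation of chains. -/
def app : {X Y Z : C} → Chain C Y Z → Chain C X Y → Chain C X Z
  | _, _, _, single f, d => cons f d
  | _, _, _, cons f c, d => cons f (app c d)

theorem snoc_eq_app : ∀ {V X Y : C} (c : Chain C X Y) (g : V ⟶ X),
    c.snoc g = app c (single g)
  | _, _, _, single _, _ => by simp [snoc, app]
  | _, _, _, cons f c, g => by simp only [snoc, app, snoc_eq_app c g]

theorem snoc_app : ∀ {V W X Y : C} (c : Chain C X Y) (d : Chain C W X) (g : V ⟶ W),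
    (app c d).snoc g = app c (d.snoc g)
  | _, _, _, _, single f, d, g => by simp [app, snoc]
  | _, _, _, _, cons f c, d, g => by simp only [app, snoc, snoc_app c d g]

theorem app_assoc : ∀ {V W X Y : C} (a : Chain C X Y) (b : Chain C W X) (c : Chain C V W),
    app (app a b) c = app a (app b c)
  | _, _, _, _, single f, b, c => by simp [app]
  | _, _, _, _, cons f a, b, c => by simp only [app, app_assoc a b c]

end Chain

theorem rotInv_iter_app : ∀ {X Y : C} (c : Chain C Y X) (d : Chain C X Y),
    rotInv^[c.size] (⟨X, Chain.app c d⟩ : CycChain C) = ⟨Y, Chain.app d c⟩ := by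
  intro X Y c
  induction c with
  | single f =>
    intro d
    simp only [Chain.size, Function.iterate_one, Chain.app, rotInv, Chain.snoc_eq_app]
    rfl
  | cons f c ih =>
    intro d
    rw [show (Chain.cons f c).size = c.size + 1 by simp only [Chain.size],
      show (Chain.cons f c).app d = Chain.cons f (c.app d) by simp only [Chain.app]]
    show rotInv^[c.size] (rotInv (⟨_, Chain.cons f (c.app d)⟩ : CycChain C)) = _
    show rotInv^[c.size] (⟨_, (c.app d).snoc f⟩ : CycChain C) = _
    rw [Chain.snoc_app, Chain.snoc_eq_app, ih (d.app (Chain.single f))]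
    exact congrArg (Sigma.mk Y) ((Chain.app_assoc _ _ _).trans (by simp only [Chain.app]))

theorem rot_snoc {V Z : C} (c : Chain C Z V) (g : V ⟶ Z) :
    rot (⟨V, c.snoc g⟩ : CycChain C) = ⟨Z, Chain.cons g c⟩ := by
  show rotInv^[(c.snoc g).size - 1] _ = _
  rw [Chain.size_snoc, Chain.snoc_eq_app]
  simp only [Nat.add_sub_cancel]
  rw [rotInv_iter_app c (Chain.single g)]
  simp [Chain.app]
  rfl

section DGHelpers

variable {S : DGSemicat.{u₁, v₁}}

theorem degCast_heq {X Y : S.Obj} {a b : ℕ} (h : a = b) (f : S.Hom X Y a) :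
    HEq (degCast h f) f := by subst h; rfl

theorem comp_congr_heq {X Y Z : S.Obj} {i i' j j' k k' : ℕ} (h : i + j = k)
    (h' : i' + j' = k') (hi : i = i') (hj : j = j') {g : S.Hom Y Z i} {g' : S.Hom Y Z i'}
    {f : S.Hom X Y j} {f' : S.Hom X Y j'} (hg : HEq g g') (hf : HEq f f') :
    HEq (S.comp h g f) (S.comp h' g' f') := by
  subst hi; subst hj
  obtain rfl : k = k' := h.symm.trans h'
  cases hg; cases hf; rfl

theorem add_congr_heq {X Y : S.Obj} {a b : ℕ} (hab : a = b) {x y : S.Hom X Y a}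
    {x' y' : S.Hom X Y b} (hx : HEq x x') (hy : HEq y y') : HEq (x + y) (x' + y') := by
  subst hab; cases hx; cases hy; rfl

theorem cast_add_dist {X Y : S.Obj} {a b : ℕ} (h : a = b) (y z : S.Hom X Y a) :
    (h ▸ (y + z) : S.Hom X Y b) = h ▸ y + h ▸ z := by subst h; rfl

end DGHelpers
/-- `∂̂ρ(f⁰) ⋯ ρ(fᵖ) ⋯ ρ(f^q) ⋯ ∂̂ρ(fⁿ)`: slots `p < q` undifferentiated, all others
differentiated (degree `size - 2`); junk value `0` for out-of-range indices. -/
def pde2 (Z : CycleOver.{u, v, u₁, v₁} C r) :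
    (X Y : C) → (c : Chain C X Y) → ℕ → ℕ → Z.S.Hom (Z.ρObj X) (Z.ρObj Y) (c.size - 2)
  | _, _, Chain.single _, _, _ => 0
  | _, _, Chain.cons f c, 0, q => Z.S.comp (by simp only [Chain.size]; omega)
      (Z.ρMap f) (prodDExcept Z _ _ c (q - 1))
  | _, _, Chain.cons _ (Chain.single _), (_+1), _ => 0
  | _, _, Chain.cons f (Chain.cons g c), (p+1), q =>
      Z.S.comp (by simp only [Chain.size]; have := Chain.one_le_size c; omega)
        (Z.S.d (Z.ρMap f)) (pde2 Z _ _ (Chain.cons g c) p (q - 1))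

/-- `ρ(f⁰) ∂̂ρ(f¹) ⋯ ρ(fᵖ) ⋯ ρ(f^q) ⋯ ∂̂ρ(fⁿ)`: slots `0`, `p`, `q` undifferentiated
(`1 ≤ p < q`), all others differentiated (degree `size - 3`). -/
def psiEl2 (Z : CycleOver.{u, v, u₁, v₁} C r) :
    (X Y : C) → (c : Chain C X Y) → ℕ → ℕ → Z.S.Hom (Z.ρObj X) (Z.ρObj Y) (c.size - 3)
  | _, _, Chain.single _, _, _ => 0
  | _, _, Chain.cons f c, p, q => Z.S.comp (by simp only [Chain.size]; omega)
      (Z.ρMap f) (pde2 Z _ _ c (p - 1) (q - 1))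

/-- `T̂(ρ(f⁰) ∂̂ρ(f¹) ⋯ ρ(fᵖ) ⋯ ρ(f^q) ⋯ ∂̂ρ(fⁿ))` (when the degree matches `r`). -/
noncomputable def trQ (Z : CycleOver.{u, v, u₁, v₁} C r) {X : C} (c : Chain C X X)
    (p q : ℕ) : ℂ :=
  if h : c.size - 3 = r then Z.tr (Z.ρObj X) (h ▸ psiEl2 Z _ _ c p q) else 0

theorem tr_congr_heq (Z : CycleOver.{u, v, u₁, v₁} C r) {X : Z.S.Obj} {a b : ℕ}
    (ha : a = r) (hb : b = r) (x : Z.S.Hom X X a) (y : Z.S.Hom X X b) (hxy : HEq x y) :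
    Z.tr X (ha ▸ x) = Z.tr X (hb ▸ y) := by
  subst ha
  obtain rfl : b = a := hb
  cases hxy; rfl
theorem DGSemicat.leibniz₀ {S : DGSemicat.{u₁, v₁}} {X Y Z : S.Obj} (g : S.Hom Y Z 0)
    (f : S.Hom X Y 0) :
    S.d (S.comp rfl g f) = S.comp rfl (S.d g) f + S.comp rfl g (S.d f) := by
  rw [S.leibniz (i := 0) (j := 0) (k := 0) rfl rfl rfl, pow_zero, one_smul]

theorem DGSemicat.comp_assoc' {S : DGSemicat.{u₁, v₁}} {W X Y Z : S.Obj} {i j k s t : ℕ}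
    (h₁ : i + j = s) (h₂ : s + k = t) (g : S.Hom Y Z i) (f : S.Hom X Y j)
    (e : S.Hom W X k) :
    S.comp h₂ (S.comp h₁ g f) e = S.comp (by omega) g (S.comp rfl f e) :=
  S.comp_assoc h₁ h₂ rfl (by omega) g f e

theorem prodD_composeAt (Z : CycleOver.{u, v, u₁, v₁} C r) :
    ∀ (i : ℕ) {X Y : C} (c : Chain C X Y), i + 2 ≤ c.size →
      HEq (prodD Z X Y (Chain.composeAt i c))
        (prodDExcept Z X Y c (i + 1) + prodDExcept Z X Y c i) := by
  intro i
  induction i with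
  | zero =>
    intro X Y c h
    match c with
    | Chain.single f => simp [Chain.size] at h
    | Chain.cons f (Chain.single g) =>
      simp only [Chain.composeAt, prodD, prodDExcept]
      refine (degCast_heq _ _).trans ?_
      rw [Z.ρMap_comp, Z.S.leibniz₀]
      refine add_congr_heq (by simp only [Chain.size] <;> omega) ?_ ?_
      · exact comp_congr_heq _ _ rfl (by simp only [Chain.size] <;> omega) HEq.rfl
          (degCast_heq _ _).symm
      · exact comp_congr_heq _ _ rfl (by simp only [Chain.size] <;> omega) HEq.rfl
          (degCast_heq _ _).symm
    | Chain.cons f (Chain.cons g c') =>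
      simp only [Chain.composeAt, prodD, prodDExcept]
      rw [Z.ρMap_comp, Z.S.leibniz₀, Z.S.comp_add_left, Z.S.comp_assoc',
        Z.S.comp_assoc']
      refine add_congr_heq (by simp only [Chain.size] <;> omega) ?_ ?_
      · exact comp_congr_heq _ _ rfl (by simp only [Chain.size] <;> omega) HEq.rfl
          (comp_congr_heq _ _ rfl (by simp only [Chain.size] <;> omega) HEq.rfl HEq.rfl)
      · exact comp_congr_heq _ _ rfl (by simp only [Chain.size] <;> omega) HEq.rfl
          (comp_congr_heq _ _ rfl (by simp only [Chain.size] <;> omega) HEq.rfl HEq.rfl)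
  | succ i ih =>
    intro X Y c h
    match c with
    | Chain.single f => simp [Chain.size] at h
    | Chain.cons f c' =>
      have hs : i + 2 ≤ c'.size := by simp only [Chain.size] at h; omega
      rw [show Chain.composeAt (i + 1) (Chain.cons f c') = Chain.cons f (Chain.composeAt i c') by cases c' <;> rfl]
      simp only [Chain.composeAt, prodD, prodDExcept]
      rw [← Z.S.comp_add_right]
      exact comp_congr_heq _ _ rfl
        (by have := Chain.size_composeAt c' i hs; omega) HEq.rfl (ih c' hs)
theorem comp_assoc_heq {S : DGSemicat.{u₁, v₁}} {W X Y Z : S.Obj} {i j k s u t t' : ℕ}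
    (h₁ : i + j = s) (h₂ : s + k = t) (h₃ : j + k = u) (h₄ : i + u = t')
    (g : S.Hom Y Z i) (f : S.Hom X Y j) (e : S.Hom W X k) :
    HEq (S.comp h₂ (S.comp h₁ g f) e) (S.comp h₄ g (S.comp h₃ f e)) := by
  obtain rfl : t = t' := by omega
  exact heq_of_eq (S.comp_assoc h₁ h₂ h₃ h₄ g f e)

theorem nat_succ_sub_one (n : ℕ) : n + 1 - 1 = n := rfl

theorem pdE_composeAt_lt (Z : CycleOver.{u, v, u₁, v₁} C r) :
    ∀ (i : ℕ) {X Y : C} (c : Chain C X Y) (j : ℕ), i < j → j + 2 ≤ c.size →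
      HEq (prodDExcept Z X Y (Chain.composeAt i c) j)
        (pde2 Z X Y c (i + 1) (j + 1) + pde2 Z X Y c i (j + 1)) := by
  intro i
  induction i with
  | zero =>
    intro X Y c j h1 h2
    obtain ⟨j', rfl⟩ : ∃ j', j = j' + 1 := ⟨j - 1, by omega⟩
    match c with
    | Chain.single f => simp only [Chain.size] at h2; omega
    | Chain.cons f (Chain.single g) => simp only [Chain.size] at h2; omega
    | Chain.cons f (Chain.cons g c') =>
      have hone := Chain.one_le_size c'
      simp only [Chain.composeAt, prodDExcept, pde2, nat_succ_sub_one]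
      rw [Z.ρMap_comp, Z.S.leibniz₀, Z.S.comp_add_left, Z.S.comp_assoc',
        Z.S.comp_assoc']
      refine add_congr_heq (by simp only [Chain.size] <;> omega) ?_ ?_
      · exact comp_congr_heq _ _ rfl (by simp only [Chain.size] <;> omega) HEq.rfl
          (comp_congr_heq _ _ rfl (by simp only [Chain.size] <;> omega) HEq.rfl HEq.rfl)
      · exact comp_congr_heq _ _ rfl (by simp only [Chain.size] <;> omega) HEq.rfl
          (comp_congr_heq _ _ rfl (by simp only [Chain.size] <;> omega) HEq.rfl HEq.rfl)
  | succ i ih =>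
    intro X Y c j h1 h2
    obtain ⟨j', rfl⟩ : ∃ j', j = j' + 1 := ⟨j - 1, by omega⟩
    match c with
    | Chain.single f => simp only [Chain.size] at h2; omega
    | Chain.cons f (Chain.single g) => simp only [Chain.size] at h2; omega
    | Chain.cons f (Chain.cons g c') =>
      have hs : j' + 2 ≤ (Chain.cons g c').size := by simp only [Chain.size] at h2 ⊢; omega
      simp only [Chain.composeAt, prodDExcept, pde2, nat_succ_sub_one]
      rw [← Z.S.comp_add_right]
      refine comp_congr_heq _ _ rfl ?_ HEq.rfl (ih (Chain.cons g c') j' (by omega) hs)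
      have := Chain.size_composeAt (Chain.cons g c') i (by omega)
      omega

theorem pdE_composeAt_eq (Z : CycleOver.{u, v, u₁, v₁} C r) :
    ∀ (j : ℕ) {X Y : C} (c : Chain C X Y), j + 2 ≤ c.size →
      HEq (prodDExcept Z X Y (Chain.composeAt j c) j) (pde2 Z X Y c j (j + 1)) := by
  intro j
  induction j with
  | zero =>
    intro X Y c h
    match c with
    | Chain.single f => simp only [Chain.size] at h; omega
    | Chain.cons f (Chain.single g) =>
      simp only [Chain.composeAt, prodDExcept, pde2, nat_succ_sub_one]
      refine (degCast_heq _ _).trans ?_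
      rw [Z.ρMap_comp]
      exact comp_congr_heq _ _ rfl (by simp only [Chain.size] <;> omega) HEq.rfl
        (degCast_heq _ _).symm
    | Chain.cons f (Chain.cons g c') =>
      have hone := Chain.one_le_size c'
      simp only [Chain.composeAt, prodDExcept, pde2, nat_succ_sub_one]
      rw [Z.ρMap_comp, Z.S.comp_assoc']
      exact comp_congr_heq _ _ rfl (by simp only [Chain.size] <;> omega) HEq.rfl
        (comp_congr_heq _ _ rfl (by simp only [Chain.size] <;> omega) HEq.rfl HEq.rfl)
  | succ j ih =>
    intro X Y c h
    match c with
    | Chain.single f => simp only [Chain.size] at h; omega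
    | Chain.cons f (Chain.single g) => simp only [Chain.size] at h; omega
    | Chain.cons f (Chain.cons g c') =>
      have hs : j + 2 ≤ (Chain.cons g c').size := by simp only [Chain.size] at h ⊢; omega
      simp only [Chain.composeAt, prodDExcept, pde2, nat_succ_sub_one]
      refine comp_congr_heq _ _ rfl ?_ HEq.rfl (ih (Chain.cons g c') hs)
      have := Chain.size_composeAt (Chain.cons g c') j hs
      omega

theorem pdE_composeAt_gt (Z : CycleOver.{u, v, u₁, v₁} C r) :
    ∀ (j i : ℕ) {X Y : C} (c : Chain C X Y), j < i → i + 2 ≤ c.size →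
      HEq (prodDExcept Z X Y (Chain.composeAt i c) j)
        (pde2 Z X Y c j (i + 1) + pde2 Z X Y c j i) := by
  intro j
  induction j with
  | zero =>
    intro i X Y c h1 h2
    obtain ⟨i', rfl⟩ : ∃ i', i = i' + 1 := ⟨i - 1, by omega⟩
    match c with
    | Chain.single f => simp only [Chain.size] at h2; omega
    | Chain.cons f c' =>
      have hs : i' + 2 ≤ c'.size := by simp only [Chain.size] at h2; omega
      rw [show Chain.composeAt (i' + 1) (Chain.cons f c') = Chain.cons f (Chain.composeAt i' c') by cases c' <;> rfl]
      simp only [Chain.composeAt, prodDExcept, pde2, nat_succ_sub_one]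
      refine HEq.trans (comp_congr_heq _
        (show (0 : ℕ) + (c'.size - 1) = (Chain.cons f c').size - 2 by
          simp only [Chain.size] <;> omega)
        rfl (by have := Chain.size_composeAt c' i' hs; omega) HEq.rfl
        (prodD_composeAt Z i' c' hs)) ?_
      refine heq_of_eq ?_
      rw [Z.S.comp_add_right]
  | succ j ih =>
    intro i X Y c h1 h2
    obtain ⟨i', rfl⟩ : ∃ i', i = i' + 1 := ⟨i - 1, by omega⟩
    match c with
    | Chain.single f => simp only [Chain.size] at h2; omega
    | Chain.cons f (Chain.single g) => simp only [Chain.size] at h2; omega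
    | Chain.cons f (Chain.cons g c') =>
      have hs : i' + 2 ≤ (Chain.cons g c').size := by simp only [Chain.size] at h2 ⊢; omega
      simp only [Chain.composeAt, prodDExcept, pde2, nat_succ_sub_one]
      rw [← Z.S.comp_add_right]
      refine comp_congr_heq _ _ rfl ?_ HEq.rfl (ih i' (Chain.cons g c') (by omega) hs)
      have := Chain.size_composeAt (Chain.cons g c') i' hs
      omega
theorem pdE_snoc_last (Z : CycleOver.{u, v, u₁, v₁} C r) :
    ∀ {V X Y : C} (c : Chain C X Y) (g : V ⟶ X),
      HEq (prodDExcept Z V Y (c.snoc g) c.size)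
        (Z.S.comp (rfl : c.size + 0 = c.size + 0) (prodD Z X Y c) (Z.ρMap g)) := by
  intro V X Y c
  induction c with
  | single f =>
    intro g
    rw [show Chain.snoc (Chain.single f) g = Chain.cons f (Chain.single g) from by
      simp [Chain.snoc]]
    conv_lhs => rw [show (Chain.single f).size = 1 from by simp [Chain.size]]
    simp only [prodDExcept, prodD]
    refine HEq.trans (comp_congr_heq _ (rfl : (0 + 1) + 0 = 0 + 1) rfl
      (by simp [Chain.size]) HEq.rfl (degCast_heq _ _)) ?_
    exact comp_congr_heq _ _ (by simp [Chain.size]) rfl (degCast_heq _ _).symm HEq.rfl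
  | cons f c' ih =>
    intro g
    rw [show Chain.snoc (Chain.cons f c') g = Chain.cons f (c'.snoc g) from by
      simp [Chain.snoc]]
    conv_lhs => rw [show (Chain.cons f c').size = c'.size + 1 from by simp [Chain.size]]
    simp only [prodDExcept, prodD]
    refine HEq.trans (comp_congr_heq _
      (rfl : (0 + 1) + (c'.size + 0) = (0 + 1) + (c'.size + 0)) rfl ?_ HEq.rfl (ih g))
      ((comp_assoc_heq _ _ _ _ _ _ _).symm)
    have := Chain.one_le_size c'
    simp only [Chain.size, Chain.size_snoc] <;> omega
theorem pde2_snoc_last (Z : CycleOver.{u, v, u₁, v₁} C r) :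
    ∀ {V X Y : C} (c : Chain C X Y) (g : V ⟶ X) (p : ℕ), p + 1 ≤ c.size →
      HEq (pde2 Z V Y (c.snoc g) p c.size)
        (Z.S.comp (rfl : (c.size - 1) + 0 = (c.size - 1) + 0)
          (prodDExcept Z X Y c p) (Z.ρMap g)) := by
  intro V X Y c
  induction c with
  | single f =>
    intro g p hp
    obtain rfl : p = 0 := by simp only [Chain.size] at hp; omega
    rw [show Chain.snoc (Chain.single f) g = Chain.cons f (Chain.single g) from by
      simp [Chain.snoc]]
    simp only [pde2, prodDExcept]
    refine HEq.trans (comp_congr_heq _ (rfl : (0 : ℕ) + 0 = 0 + 0) rfl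
      (by simp [Chain.size]) HEq.rfl (degCast_heq _ _)) ?_
    exact comp_congr_heq _ _ (by simp [Chain.size]) rfl (degCast_heq _ _).symm HEq.rfl
  | cons f c' ih =>
    intro g p hp
    rw [show Chain.snoc (Chain.cons f c') g = Chain.cons f (c'.snoc g) from by
      simp [Chain.snoc]]
    match p, hp with
    | 0, _ =>
      simp only [pde2, prodDExcept]
      conv_lhs => rw [show (Chain.cons f c').size - 1 = c'.size from by
        simp [Chain.size]]
      refine HEq.trans (comp_congr_heq _
        (rfl : (0 : ℕ) + (c'.size + 0) = 0 + (c'.size + 0)) rfl ?_ HEq.rfl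
        (pdE_snoc_last Z c' g)) ((comp_assoc_heq _ _ _ _ _ _ _).symm)
      have := Chain.one_le_size c'
      simp only [Chain.size, Chain.size_snoc] <;> omega
    | (p+1), hp =>
      have hp' : p + 1 ≤ c'.size := by simp only [Chain.size] at hp; omega
      match c' , ih, hp' with
      | Chain.single h, ih, hp' =>
        obtain rfl : p = 0 := by simp only [Chain.size] at hp'; omega
        rw [show Chain.snoc (Chain.single h) g = Chain.cons h (Chain.single g) from by
          simp [Chain.snoc]]
        simp only [pde2, prodDExcept]
        refine HEq.trans (b := Z.S.comp (rfl : (0 + 1) + (0 + 0) = (0 + 1) + (0 + 0))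
          (Z.S.d (Z.ρMap f))
          (Z.S.comp (rfl : (0 : ℕ) + 0 = 0 + 0) (Z.ρMap h) (Z.ρMap g))) ?_ ?_
        · refine comp_congr_heq _ _ rfl (by simp [Chain.size] <;> omega) HEq.rfl ?_
          exact comp_congr_heq _ _ rfl (by simp [Chain.size]) HEq.rfl (degCast_heq _ _)
        · refine HEq.symm ?_
          refine HEq.trans (comp_assoc_heq _ _
            (rfl : ((Chain.single h).size - 1) + 0 = (Chain.single h).size - 1 + 0)
            (rfl : (0 + 1) + ((Chain.single h).size - 1 + 0) =
              (0 + 1) + ((Chain.single h).size - 1 + 0)) _ _ _) ?_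
          refine comp_congr_heq _ _ rfl (by simp [Chain.size]) HEq.rfl ?_
          exact comp_congr_heq _ _ (by simp [Chain.size]) rfl (degCast_heq _ _) HEq.rfl
      | Chain.cons h c'', ih, hp' =>
        have ih' := ih g p hp'
        rw [show Chain.snoc (Chain.cons h c'') g = Chain.cons h (c''.snoc g) from by
          simp [Chain.snoc]] at ih' ⊢
        simp only [pde2, prodDExcept]
        conv_lhs => rw [show (Chain.cons f (Chain.cons h c'')).size - 1 =
          (Chain.cons h c'').size from by simp [Chain.size]]
        have hone := Chain.one_le_size c''
        refine HEq.trans (comp_congr_heq _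
          (rfl : (0 + 1) + (((Chain.cons h c'').size - 1) + 0) =
            (0 + 1) + (((Chain.cons h c'').size - 1) + 0)) rfl ?_ HEq.rfl
          ih') ((comp_assoc_heq _ _ _ _ _ _ _).symm)
        simp only [Chain.size, Chain.size_snoc] <;> omega
theorem trPsi_eq_tr (Z : CycleOver.{u, v, u₁, v₁} C r) {X : C} (c : Chain C X X) (j : ℕ)
    (h : c.size - 2 = r) (y : Z.S.Hom (Z.ρObj X) (Z.ρObj X) r)
    (hy : HEq (psiEl Z X X c j) y) : trPsi Z c j = Z.tr (Z.ρObj X) y := by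
  subst h
  rw [trPsi, dif_pos rfl]
  exact congrArg _ (eq_of_heq hy)

theorem trQ_eq_tr (Z : CycleOver.{u, v, u₁, v₁} C r) {X : C} (c : Chain C X X) (p q : ℕ)
    (h : c.size - 3 = r) (y : Z.S.Hom (Z.ρObj X) (Z.ρObj X) r)
    (hy : HEq (psiEl2 Z X X c p q) y) : trQ Z c p q = Z.tr (Z.ρObj X) y := by
  subst h
  rw [trQ, dif_pos rfl]
  exact congrArg _ (eq_of_heq hy)

theorem trPsi_eq_trQ (Z : CycleOver.{u, v, u₁, v₁} C r) {X : C} (c d : Chain C X X)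
    (j p q : ℕ) (h : c.size - 2 = r) (h' : d.size - 3 = r)
    (he : HEq (psiEl Z X X c j) (psiEl2 Z X X d p q)) : trPsi Z c j = trQ Z d p q := by
  rw [trQ_eq_tr Z d p q h' (degCast h' _) (degCast_heq _ _).symm]
  exact trPsi_eq_tr Z c j h _ (he.trans (degCast_heq _ _).symm)

theorem trPsi_eq_trQ_add (Z : CycleOver.{u, v, u₁, v₁} C r) {X : C} (c d : Chain C X X)
    (j p q p' q' : ℕ) (h : c.size - 2 = r) (h' : d.size - 3 = r)
    (he : HEq (psiEl Z X X c j) (psiEl2 Z X X d p q + psiEl2 Z X X d p' q')) :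
    trPsi Z c j = trQ Z d p q + trQ Z d p' q' := by
  rw [trQ_eq_tr Z d p q h' (degCast h' _) (degCast_heq _ _).symm,
    trQ_eq_tr Z d p' q' h' (degCast h' _) (degCast_heq _ _).symm, ← map_add]
  exact trPsi_eq_tr Z c j h _
    (he.trans (add_congr_heq h' (degCast_heq _ _).symm (degCast_heq _ _).symm))

theorem trPsi_comp_zero (Z : CycleOver.{u, v, u₁, v₁} C r) {X : C} (ch : Chain C X X)
    (hs : ch.size = r + 3) (j : ℕ) (hj1 : 1 ≤ j) (hj2 : j ≤ r + 1) :
    trPsi Z (Chain.composeAt 0 ch) j = trQ Z ch 1 (j + 1) := by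
  match ch, hs with
  | Chain.single f, hs => simp only [Chain.size] at hs; omega
  | Chain.cons f (Chain.single g), hs => simp only [Chain.size] at hs; omega
  | Chain.cons f (Chain.cons g c'), hs =>
    have hc : c'.size = r + 1 := by simp only [Chain.size] at hs; omega
    simp only [Chain.composeAt]
    refine trPsi_eq_trQ Z _ _ j 1 (j + 1) (by simp only [Chain.size]; omega)
      (by simp only [Chain.size]; omega) ?_
    simp only [psiEl, psiEl2, pde2, nat_succ_sub_one, Nat.sub_self]
    rw [Z.ρMap_comp, Z.S.comp_assoc']
    exact comp_congr_heq _ _ rfl (by simp only [Chain.size] <;> omega) HEq.rfl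
      (comp_congr_heq _ _ rfl rfl HEq.rfl HEq.rfl)

theorem trPsi_comp_diag (Z : CycleOver.{u, v, u₁, v₁} C r) {X : C} (ch : Chain C X X)
    (hs : ch.size = r + 3) (j : ℕ) (hj1 : 1 ≤ j) (hj2 : j ≤ r + 1) :
    trPsi Z (Chain.composeAt j ch) j = trQ Z ch j (j + 1) := by
  obtain ⟨j', rfl⟩ : ∃ j', j = j' + 1 := ⟨j - 1, by omega⟩
  match ch, hs with
  | Chain.single f, hs => simp only [Chain.size] at hs; omega
  | Chain.cons f c, hs =>
    have hc : c.size = r + 2 := by simp only [Chain.size] at hs; omega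
    have hj' : j' + 2 ≤ c.size := by omega
    have hsz := Chain.size_composeAt c j' hj'
    simp only [Chain.composeAt]
    refine trPsi_eq_trQ Z _ _ (j' + 1) (j' + 1) (j' + 2)
      (by simp only [Chain.size]; omega) (by simp only [Chain.size]; omega) ?_
    simp only [psiEl, psiEl2, nat_succ_sub_one]
    exact comp_congr_heq _ _ rfl (by omega) HEq.rfl (pdE_composeAt_eq Z j' c hj')

theorem trPsi_comp_lt (Z : CycleOver.{u, v, u₁, v₁} C r) {X : C} (ch : Chain C X X)
    (hs : ch.size = r + 3) (i j : ℕ) (hi : 1 ≤ i) (hij : i < j) (hj : j ≤ r + 1) :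
    trPsi Z (Chain.composeAt i ch) j = trQ Z ch (i + 1) (j + 1) + trQ Z ch i (j + 1) := by
  obtain ⟨i', rfl⟩ : ∃ i', i = i' + 1 := ⟨i - 1, by omega⟩
  obtain ⟨j', rfl⟩ : ∃ j', j = j' + 1 := ⟨j - 1, by omega⟩
  match ch, hs with
  | Chain.single f, hs => simp only [Chain.size] at hs; omega
  | Chain.cons f c, hs =>
    have hc : c.size = r + 2 := by simp only [Chain.size] at hs; omega
    have hi' : i' + 2 ≤ c.size := by omega
    have hsz := Chain.size_composeAt c i' hi'
    simp only [Chain.composeAt]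
    refine trPsi_eq_trQ_add Z _ _ (j' + 1) (i' + 2) (j' + 2) (i' + 1) (j' + 2)
      (by simp only [Chain.size]; omega) (by simp only [Chain.size]; omega) ?_
    simp only [psiEl, psiEl2, nat_succ_sub_one]
    rw [← Z.S.comp_add_right]
    exact comp_congr_heq _ _ rfl (by omega) HEq.rfl
      (pdE_composeAt_lt Z i' c j' (by omega) (by omega))

theorem trPsi_comp_gt (Z : CycleOver.{u, v, u₁, v₁} C r) {X : C} (ch : Chain C X X)
    (hs : ch.size = r + 3) (i j : ℕ) (hj1 : 1 ≤ j) (hji : j < i) (hi : i ≤ r + 1) :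
    trPsi Z (Chain.composeAt i ch) j = trQ Z ch j (i + 1) + trQ Z ch j i := by
  obtain ⟨i', rfl⟩ : ∃ i', i = i' + 1 := ⟨i - 1, by omega⟩
  obtain ⟨j', rfl⟩ : ∃ j', j = j' + 1 := ⟨j - 1, by omega⟩
  match ch, hs with
  | Chain.single f, hs => simp only [Chain.size] at hs; omega
  | Chain.cons f c, hs =>
    have hc : c.size = r + 2 := by simp only [Chain.size] at hs; omega
    have hi' : i' + 2 ≤ c.size := by omega
    have hsz := Chain.size_composeAt c i' hi'
    simp only [Chain.composeAt]
    refine trPsi_eq_trQ_add Z _ _ (j' + 1) (j' + 1) (i' + 2) (j' + 1) (i' + 1)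
      (by simp only [Chain.size]; omega) (by simp only [Chain.size]; omega) ?_
    simp only [psiEl, psiEl2, nat_succ_sub_one]
    rw [← Z.S.comp_add_right]
    exact comp_congr_heq _ _ rfl (by omega) HEq.rfl
      (pdE_composeAt_gt Z j' i' c (by omega) (by omega))
theorem trPsi_cyc (Z : CycleOver.{u, v, u₁, v₁} C r) (t : CycChain C)
    (hs : t.2.size = r + 3) (j : ℕ) (hj1 : 1 ≤ j) (hj2 : j ≤ r + 1) :
    trPsi Z (Chain.composeAt 0 (rot t).2) j = trQ Z t.2 j (r + 2) := by
  obtain ⟨V, ch⟩ := t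
  have hs' : ch.size = r + 3 := hs
  obtain ⟨W, d, g, rfl⟩ := Chain.eq_snoc_of_two_le_size ch (by omega)
  have hd : d.size = r + 2 := by rw [Chain.size_snoc] at hs'; omega
  rw [rot_snoc d g]
  show trPsi Z (Chain.composeAt 0 (Chain.cons g d)) j = trQ Z (d.snoc g) j (r + 2)
  match d, hd with
  | Chain.single f, hd => simp only [Chain.size] at hd; omega
  | Chain.cons f₀ d', hd =>
    have hd' : d'.size = r + 1 := by simp only [Chain.size] at hd; omega
    have hone := Chain.one_le_size d'
    simp only [Chain.composeAt]
    rw [trPsi_eq_tr Z (Chain.cons (f₀ ≫ g) d') j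
      (by simp only [Chain.size]; omega)
      (Z.S.comp (show 0 + r = r from by omega) (Z.ρMap g)
        (degCast (show (Chain.cons f₀ d').size - 2 = r from by
            simp only [Chain.size]; omega)
          (psiEl Z _ _ (Chain.cons f₀ d') j)))
      (by
        simp only [psiEl]
        rw [Z.ρMap_comp, Z.S.comp_assoc']
        refine comp_congr_heq _ _ rfl (by omega) HEq.rfl ?_
        refine HEq.trans ?_ (degCast_heq _ _).symm
        exact comp_congr_heq _ _ rfl rfl HEq.rfl HEq.rfl)]
    rw [Z.tr_graded (show 0 + r = r from by omega) (show r + 0 = r from by omega)]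
    simp only [Nat.zero_mul, pow_zero, one_mul]
    conv_rhs => rw [show Chain.snoc (Chain.cons f₀ d') g = Chain.cons f₀ (d'.snoc g)
      from by simp [Chain.snoc]]
    rw [trQ_eq_tr Z (Chain.cons f₀ (d'.snoc g)) j (r + 2)
      (by simp only [Chain.size, Chain.size_snoc]; omega)
      (Z.S.comp (show r + 0 = r from by omega)
        (degCast (show (Chain.cons f₀ d').size - 2 = r from by
            simp only [Chain.size]; omega)
          (psiEl Z _ _ (Chain.cons f₀ d') j)) (Z.ρMap g))
      (by
        simp only [psiEl2, psiEl]
        conv_lhs => rw [show r + 2 - 1 = d'.size from by omega]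
        refine HEq.trans (comp_congr_heq _
          (rfl : (0 : ℕ) + ((d'.size - 1) + 0) = 0 + ((d'.size - 1) + 0)) rfl
          (by rw [Chain.size_snoc] <;> omega) HEq.rfl
          (pde2_snoc_last Z d' g (j - 1) (by omega))) ?_
        refine HEq.trans ((comp_assoc_heq
          (show (0 : ℕ) + (d'.size - 1) = (Chain.cons f₀ d').size - 2 from by
            simp only [Chain.size] <;> omega)
          (show ((Chain.cons f₀ d').size - 2) + 0 = 0 + ((d'.size - 1) + 0) from by
            simp only [Chain.size] <;> omega)
          (rfl : (d'.size - 1) + 0 = (d'.size - 1) + 0)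
          (rfl : (0 : ℕ) + ((d'.size - 1) + 0) = 0 + ((d'.size - 1) + 0))
          (Z.ρMap f₀) (prodDExcept Z _ _ d' (j - 1)) (Z.ρMap g)).symm) ?_
        refine comp_congr_heq _ _ (by simp only [Chain.size] <;> omega) rfl ?_ HEq.rfl
        refine HEq.trans (comp_congr_heq _ _ rfl rfl HEq.rfl HEq.rfl)
          (degCast_heq _ _).symm)]
theorem sum_neg_one_pow_telescope (g : ℕ → ℂ) (a : ℕ) : ∀ (b : ℕ), a ≤ b →
    ∑ i ∈ Finset.Ico a b, (-1 : ℂ) ^ i * (g i + g (i + 1)) =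
      (-1 : ℂ) ^ a * g a - (-1 : ℂ) ^ b * g b := by
  intro b hab
  induction b, hab using Nat.le_induction with
  | base => simp
  | succ b hb ih =>
    rw [Finset.sum_Ico_succ_top (by omega), ih, pow_succ]
    ring

theorem key_inner (r : ℕ) (Q T : ℕ → ℕ → ℂ) (j : ℕ) (hj1 : 1 ≤ j) (hj2 : j ≤ r + 1)
    (h0 : T 0 j = Q 1 (j + 1))
    (hlt : ∀ i, 1 ≤ i → i < j → T i j = Q (i + 1) (j + 1) + Q i (j + 1))
    (hdiag : T j j = Q j (j + 1))
    (hgt : ∀ i, j < i → i ≤ r + 1 → T i j = Q j (i + 1) + Q j i) :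
    ∑ i ∈ Finset.range (r + 2), (-1 : ℂ) ^ i * T i j =
      (-1 : ℂ) ^ (j + 1) * Q j (j + 1) - (-1 : ℂ) ^ (r + 2) * Q j (r + 2) := by
  rw [Finset.range_eq_Ico,
    ← Finset.sum_Ico_consecutive _ (Nat.zero_le j) (by omega : j ≤ r + 2),
    Finset.sum_eq_sum_Ico_succ_bot (by omega : 0 < j),
    Finset.sum_eq_sum_Ico_succ_bot (by omega : j < r + 2)]
  have e1 : ∑ i ∈ Finset.Ico 1 j, (-1 : ℂ) ^ i * T i j
      = ∑ i ∈ Finset.Ico 1 j, (-1 : ℂ) ^ i * (Q i (j + 1) + Q (i + 1) (j + 1)) := by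
    refine Finset.sum_congr rfl fun i hi => ?_
    obtain ⟨h1, h2⟩ := Finset.mem_Ico.mp hi
    rw [hlt i h1 h2]; ring
  have e2 : ∑ i ∈ Finset.Ico (j + 1) (r + 2), (-1 : ℂ) ^ i * T i j
      = ∑ i ∈ Finset.Ico (j + 1) (r + 2), (-1 : ℂ) ^ i * (Q j i + Q j (i + 1)) := by
    refine Finset.sum_congr rfl fun i hi => ?_
    obtain ⟨h1, h2⟩ := Finset.mem_Ico.mp hi
    rw [hgt i (by omega) (by omega)]; ring
  rw [e1, e2, sum_neg_one_pow_telescope _ 1 j (by omega),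
    sum_neg_one_pow_telescope _ (j + 1) (r + 2) (by omega), h0, hdiag]
  ring

theorem key_sum (r : ℕ) (T Q : ℕ → ℕ → ℂ) (R : ℕ → ℂ)
    (h0 : ∀ j, 1 ≤ j → j ≤ r + 1 → T 0 j = Q 1 (j + 1))
    (hlt : ∀ i j, 1 ≤ i → i < j → j ≤ r + 1 → T i j = Q (i + 1) (j + 1) + Q i (j + 1))
    (hdiag : ∀ j, 1 ≤ j → j ≤ r + 1 → T j j = Q j (j + 1))
    (hgt : ∀ i j, 1 ≤ j → j < i → i ≤ r + 1 → T i j = Q j (i + 1) + Q j i)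
    (hcyc : ∀ j, 1 ≤ j → j ≤ r + 1 → R j = Q j (r + 2)) :
    ∑ j ∈ Finset.Icc 1 (r + 1), T j j =
      (∑ i ∈ Finset.range (r + 2), (-1 : ℂ) ^ i *
        ∑ j ∈ Finset.Icc 1 (r + 1), (-1 : ℂ) ^ (j - 1) * T i j) +
      (-1 : ℂ) ^ (r + 2) * ∑ j ∈ Finset.Icc 1 (r + 1), (-1 : ℂ) ^ (j - 1) * R j := by
  have swap : ∑ i ∈ Finset.range (r + 2), (-1 : ℂ) ^ i *
      ∑ j ∈ Finset.Icc 1 (r + 1), (-1 : ℂ) ^ (j - 1) * T i j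
      = ∑ j ∈ Finset.Icc 1 (r + 1), (-1 : ℂ) ^ (j - 1) *
        ∑ i ∈ Finset.range (r + 2), (-1 : ℂ) ^ i * T i j := by
    simp only [Finset.mul_sum]
    rw [Finset.sum_comm]
    refine Finset.sum_congr rfl fun j _ => Finset.sum_congr rfl fun i _ => by ring
  rw [swap, Finset.mul_sum, ← Finset.sum_add_distrib]
  refine Finset.sum_congr rfl fun j hj => ?_
  obtain ⟨hj1, hj2⟩ := Finset.mem_Icc.mp hj
  rw [key_inner r Q T j hj1 hj2 (h0 j hj1 hj2) (fun i a b => hlt i j a b hj2)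
    (hdiag j hj1 hj2) (fun i a b => hgt i j hj1 a b), hcyc j hj1 hj2,
    hdiag j hj1 hj2]
  obtain ⟨j', rfl⟩ : ∃ j', j = j' + 1 := ⟨j - 1, by omega⟩
  rw [show j' + 1 - 1 = j' from rfl]
  have hpow : (-1 : ℂ) ^ j' * (-1 : ℂ) ^ (j' + 1 + 1) = 1 := by
    rw [← pow_add, show j' + (j' + 1 + 1) = 2 * (j' + 1) by omega, pow_mul]
    norm_num
  calc Q (j' + 1) (j' + 1 + 1)
      = ((-1 : ℂ) ^ j' * (-1 : ℂ) ^ (j' + 1 + 1)) * Q (j' + 1) (j' + 1 + 1) := by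
        rw [hpow, one_mul]
    _ = (-1 : ℂ) ^ j' * ((-1 : ℂ) ^ (j' + 1 + 1) * Q (j' + 1) (j' + 1 + 1)
          - (-1 : ℂ) ^ (r + 2) * Q (j' + 1) (r + 2))
        + (-1 : ℂ) ^ (r + 2) * ((-1 : ℂ) ^ j' * Q (j' + 1) (r + 2)) := by ring
/-- Let `φ ∈ CN^r(C)` be the character of an `r`-dimensional cycle
`(S, ∂̂, T̂, ρ)` over `C`.  Then `Sφ = bψ`, where
`ψ(f⁰⊗…⊗f^{r+1}) = Σ_{j=1}^{r+1} (-1)^{j-1} T̂(ρ(f⁰)∂̂ρ(f¹)⋯ρ(fʲ)⋯∂̂ρ(f^{r+1}))`;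
in particular `Sφ` is a Hochschild coboundary. -/
theorem S_char_eq_b_psi {C : Type u} [Category.{v} C] [Preadditive C]
    [CategoryTheory.Linear ℂ C] {r : ℕ} (Z : CycleOver.{u, v, u₁, v₁} C r) :
    ∀ t : CycChain C, t.2.size = r + 3 →
      SCochain Z t = bOp (r + 1) (psiCochain Z) t := by
  intro t hsize
  obtain ⟨X, ch⟩ := t
  have hs : ch.size = r + 3 := hsize
  simp only [SCochain, bOp, psiCochain]
  exact key_sum r (fun i j => trPsi Z (Chain.composeAt i ch) j)
    (fun p q => trQ Z ch p q)
    (fun j => trPsi Z (Chain.composeAt 0 (rot ⟨X, ch⟩).2) j)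
    (fun j hj1 hj2 => trPsi_comp_zero Z ch hs j hj1 hj2)
    (fun i j hi hij hj => trPsi_comp_lt Z ch hs i j hi hij hj)
    (fun j hj1 hj2 => trPsi_comp_diag Z ch hs j hj1 hj2)
    (fun i j hj1 hji hi => trPsi_comp_gt Z ch hs i j hj1 hji hi)
    (fun j hj1 hj2 => trPsi_cyc Z ⟨X, ch⟩ hsize j hj1 hj2)

end CFM
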